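/- Let n ≥ 1, x > 0, 0 ≤ m < n, and let y, z ≥ 0 satisfy y + z = x. Let v* = v_y + v_z ∈ ℝⁿ be any duo-equidistant vector in Γ(m, y, z), and let Δ_Y = ⌊(n+1)/(m+1)⌋. Then for every j with Δ_Y < j ≤ n: f_j(v*) = 0; equivalently, every window of j consecutive coordinates of v* has sum at least x. -/

import Mathlib

open Finset

/-- `f_j v = Σ_{l=1}^{n+1−j} (x − Σ_{i=0}^{j−1} v_{l+i})⁺`, the sum of positive parts of
the deficits of all length-`j` windows of consecutive coordinates (`l` is 0-indexed here). -/
noncomputable def fj (n : ℕ) (x : ℝ) (j : ℕ) (v : Fin n → ℝ) : ℝ :=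
  ∑ l ∈ Finset.range (n + 1 - j),
    max (x - ∑ i ∈ Finset.range j, if h : l + i < n then v ⟨l + i, h⟩ else 0) 0

/-- A duo-equidistant vector `v = v_y + v_z ∈ Γ(m, y, z)`: `v_y` places mass `y` at the `m`
partial sums `Σ_{k=1}^{j} Δ_{y,k}` (`1 ≤ j ≤ m`) of positive integers
`Δ_{y,1},…,Δ_{y,m+1} ∈ {Δ_Y, Δ_Y+1}` (`Δ_Y = ⌊(n+1)/(m+1)⌋`) summing to `n+1`, and `v_z`
places mass `z` at the `m+1` partial sums `Σ_{k=1}^{j} Δ_{z,k}` (`1 ≤ j ≤ m+1`) of positive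
integers `Δ_{z,1},…,Δ_{z,m+2} ∈ {Δ_Z, Δ_Z+1}` (`Δ_Z = ⌊(n+1)/(m+2)⌋`) summing to `n+1`.
Indices of `v` are 1-based in this description (`Fin n` is 0-based, whence the `+ 1`). -/
def IsDuoEquidistant (n m : ℕ) (y z : ℝ) (v : Fin n → ℝ) : Prop :=
  ∃ vy vz : Fin n → ℝ, ∃ Δy Δz : ℕ → ℕ,
    v = vy + vz ∧
    (∀ k ∈ Finset.Icc 1 (m + 1), 0 < Δy k) ∧
    (∀ k ∈ Finset.Icc 1 (m + 1),
      Δy k = (n + 1) / (m + 1) ∨ Δy k = (n + 1) / (m + 1) + 1) ∧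
    (∑ k ∈ Finset.Icc 1 (m + 1), Δy k = n + 1) ∧
    (∀ k ∈ Finset.Icc 1 (m + 2), 0 < Δz k) ∧
    (∀ k ∈ Finset.Icc 1 (m + 2),
      Δz k = (n + 1) / (m + 2) ∨ Δz k = (n + 1) / (m + 2) + 1) ∧
    (∑ k ∈ Finset.Icc 1 (m + 2), Δz k = n + 1) ∧
    (∀ i : Fin n,
      ((∃ j, 1 ≤ j ∧ j ≤ m ∧ (i : ℕ) + 1 = ∑ k ∈ Finset.Icc 1 j, Δy k) → vy i = y) ∧
      (¬ (∃ j, 1 ≤ j ∧ j ≤ m ∧ (i : ℕ) + 1 = ∑ k ∈ Finset.Icc 1 j, Δy k) → vy i = 0)) ∧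
    (∀ i : Fin n,
      ((∃ j, 1 ≤ j ∧ j ≤ m + 1 ∧ (i : ℕ) + 1 = ∑ k ∈ Finset.Icc 1 j, Δz k) → vz i = z) ∧
      (¬ (∃ j, 1 ≤ j ∧ j ≤ m + 1 ∧ (i : ℕ) + 1 = ∑ k ∈ Finset.Icc 1 j, Δz k) → vz i = 0))


lemma key_find (n M D j l : ℕ) (Δ : ℕ → ℕ)
    (hΔle : ∀ k ∈ Finset.Icc 1 (M+1), Δ k ≤ D + 1)
    (hΔsum : ∑ k ∈ Finset.Icc 1 (M+1), Δ k = n + 1)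
    (hDj : D + 1 ≤ j) (hlj : l + j ≤ n) :
    ∃ p, 1 ≤ p ∧ p ≤ M ∧ l < ∑ k ∈ Finset.Icc 1 p, Δ k ∧
      ∑ k ∈ Finset.Icc 1 p, Δ k ≤ l + j := by
  classical
  have hex : ∃ p, l < ∑ k ∈ Finset.Icc 1 p, Δ k := ⟨M+1, by omega⟩
  set p := Nat.find hex with hpdef
  have hp : l < ∑ k ∈ Finset.Icc 1 p, Δ k := Nat.find_spec hex
  have hpM1 : p ≤ M + 1 := Nat.find_le (by omega)
  have hp1 : 1 ≤ p := by
    by_contra h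
    have h0 : p = 0 := by omega
    rw [h0] at hp; simp at hp
  have hprev : ¬ (l < ∑ k ∈ Finset.Icc 1 (p-1), Δ k) := Nat.find_min hex (by omega)
  have hsucc : ∑ k ∈ Finset.Icc 1 p, Δ k = (∑ k ∈ Finset.Icc 1 (p-1), Δ k) + Δ p := by
    have hrw : p = (p - 1) + 1 := by omega
    rw [hrw, Finset.sum_Icc_succ_top (by omega), Nat.add_sub_cancel]
  have hle : Δ p ≤ D + 1 := hΔle p (by simp; omega)
  have hub : ∑ k ∈ Finset.Icc 1 p, Δ k ≤ l + j := by omega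
  have hpM : p ≤ M := by
    rcases Nat.lt_or_ge p (M+1) with h | h
    · omega
    · exfalso
      have : p = M + 1 := by omega
      rw [this] at hub
      omega
  exact ⟨p, hp1, hpM, hp, hub⟩

lemma sum_window_ge (n j l : ℕ) (c : ℝ) (w : Fin n → ℝ) (hw : ∀ i, 0 ≤ w i)
    (i0 : ℕ) (hi0 : i0 < n) (h1 : l ≤ i0) (h2 : i0 < l + j) (hc : w ⟨i0, hi0⟩ = c) :
    c ≤ ∑ i ∈ Finset.range j, if h : l + i < n then w ⟨l + i, h⟩ else 0 := by
  have hmem : i0 - l ∈ Finset.range j := by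
    rw [Finset.mem_range]; omega
  have heq : c = (if h : l + (i0 - l) < n then w ⟨l + (i0 - l), h⟩ else 0) := by
    have h3 : l + (i0 - l) = i0 := by omega
    simp only [h3]
    rw [dif_pos hi0, hc]
  rw [heq]
  exact Finset.single_le_sum (f := fun i => if h : l + i < n then w ⟨l + i, h⟩ else 0)
    (fun i _ => by split_ifs with h; exacts [hw _, le_refl 0]) hmem

/-- For a duo-equidistant vector in `Γ(m, y, z)` with `y + z = x` and `Δ_Y < j ≤ n`,
`f_j(v*) = 0`; equivalently every window of `j` consecutive coordinates has sum `≥ x`. -/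
theorem statement15 (n m : ℕ) (hn : 1 ≤ n) (hm : m < n) (x y z : ℝ) (hx : 0 < x)
    (hy : 0 ≤ y) (hz : 0 ≤ z) (hyz : y + z = x)
    (vstar : Fin n → ℝ) (hv : IsDuoEquidistant n m y z vstar)
    (j : ℕ) (hj1 : (n + 1) / (m + 1) < j) (hj2 : j ≤ n) :
    fj n x j vstar = 0 ∧
    ∀ l ∈ Finset.range (n + 1 - j),
      x ≤ ∑ i ∈ Finset.range j, if h : l + i < n then vstar ⟨l + i, h⟩ else 0 := by
  classical
  obtain ⟨vy, vz, Δy, Δz, heq, _, hyrange, hysum, _, hzrange, hzsum, hvy, hvz⟩ := hv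
  have hvy0 : ∀ i, 0 ≤ vy i := by
    intro i
    by_cases hcase : ∃ j', 1 ≤ j' ∧ j' ≤ m ∧ (i : ℕ) + 1 = ∑ k ∈ Finset.Icc 1 j', Δy k
    · rw [(hvy i).1 hcase]; exact hy
    · rw [(hvy i).2 hcase]
  have hvz0 : ∀ i, 0 ≤ vz i := by
    intro i
    by_cases hcase : ∃ j', 1 ≤ j' ∧ j' ≤ m + 1 ∧ (i : ℕ) + 1 = ∑ k ∈ Finset.Icc 1 j', Δz k
    · rw [(hvz i).1 hcase]; exact hz
    · rw [(hvz i).2 hcase]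
  have hZY : (n + 1) / (m + 2) ≤ (n + 1) / (m + 1) :=
    Nat.div_le_div_left (by omega) (by omega)
  have hwin : ∀ l ∈ Finset.range (n + 1 - j),
      x ≤ ∑ i ∈ Finset.range j, if h : l + i < n then vstar ⟨l + i, h⟩ else 0 := by
    intro l hl
    rw [Finset.mem_range] at hl
    have hlj : l + j ≤ n := by omega
    -- y point
    obtain ⟨py, hpy1, hpy2, hpy3, hpy4⟩ :=
      key_find n m ((n + 1) / (m + 1)) j l Δy
        (fun k hk => by rcases hyrange k hk with h | h <;> omega) hysum (by omega) hlj
    obtain ⟨pz, hpz1, hpz2, hpz3, hpz4⟩ :=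
      key_find n (m + 1) ((n + 1) / (m + 2)) j l Δz
        (fun k hk => by rcases hzrange k hk with h | h <;> omega) hzsum (by omega) hlj
    set Sy := ∑ k ∈ Finset.Icc 1 py, Δy k with hSy
    set Sz := ∑ k ∈ Finset.Icc 1 pz, Δz k with hSz
    have hiy : Sy - 1 < n := by omega
    have hiz : Sz - 1 < n := by omega
    have hyval : vy ⟨Sy - 1, hiy⟩ = y :=
      (hvy _).1 ⟨py, hpy1, hpy2, by simp; omega⟩
    have hzval : vz ⟨Sz - 1, hiz⟩ = z :=
      (hvz _).1 ⟨pz, hpz1, hpz2, by simp; omega⟩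
    have hyle : y ≤ ∑ i ∈ Finset.range j, if h : l + i < n then vy ⟨l + i, h⟩ else 0 :=
      sum_window_ge n j l y vy hvy0 (Sy - 1) hiy (by omega) (by omega) hyval
    have hzle : z ≤ ∑ i ∈ Finset.range j, if h : l + i < n then vz ⟨l + i, h⟩ else 0 :=
      sum_window_ge n j l z vz hvz0 (Sz - 1) hiz (by omega) (by omega) hzval
    have hsplit : (∑ i ∈ Finset.range j, if h : l + i < n then vstar ⟨l + i, h⟩ else 0)
        = (∑ i ∈ Finset.range j, if h : l + i < n then vy ⟨l + i, h⟩ else 0)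
          + (∑ i ∈ Finset.range j, if h : l + i < n then vz ⟨l + i, h⟩ else 0) := by
      rw [← Finset.sum_add_distrib]
      refine Finset.sum_congr rfl fun i _ => ?_
      split_ifs with h
      · rw [heq]; rfl
      · ring
    rw [hsplit, ← hyz]
    exact add_le_add hyle hzle
  refine ⟨?_, hwin⟩
  unfold fj
  refine Finset.sum_eq_zero fun l hl => ?_
  have := hwin l hl
  exact max_eq_right (by linarith)
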